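/- arXiv:2110.11050 — 2 statements merged into one kernel-verified Lean document; each statement's English description precedes it below -/
import Mathlib

section
/- The group PSL(2,7) has no subgroup isomorphic to the dihedral group of order 14. -/
open MatrixGroups Matrix

namespace PSL27Aux

instance fact7 : Fact (Nat.Prime 7) := ⟨by norm_num⟩

lemma h70 : (7 : ZMod 7) = 0 := by decide

lemma sq_ne_neg_one : ∀ x : ZMod 7, x^2 ≠ -1 := by decide

set_option maxRecDepth 40000 in
lemma traceLemmaM : ∀ a b c d : ZMod 7, a*d - b*c = 1 →
    ((!![a,b;c,d])^7 = 1 ∨ (!![a,b;c,d])^7 = -1) →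
    (a + d = 2 ∨ a + d = 5) := by decide

lemma conj1 (a b c d p q r s : ZMod 7)
    (hdA : a*d - b*c = 1) (htr : a + d = 2) (hne : ¬(b = 0 ∧ c = 0))
    (hdB : p*s - q*r = 1)
    (e11 : p*a + q*c = d*p - b*r)
    (e12 : p*b + q*d = d*q - b*s)
    (e21 : r*a + s*c = -(c*p) + a*r)
    (e22 : r*b + s*d = -(c*q) + a*s) : False := by
  have hd : d = 2 - a := by linear_combination htr
  subst hd
  by_cases hb : b = 0
  · have hc : c ≠ 0 := fun hc => hne ⟨hb, hc⟩
    subst hb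
    have ha : a = 1 := by
      have h : a*(2-a) = 1 := by linear_combination hdA
      have h2 : ∀ x : ZMod 7, x*(2-x) = 1 → x = 1 := by decide
      exact h2 a h
    subst ha
    have hs : s = -p := by
      have h2 : c * (s + p) = 0 := by linear_combination e21
      have := (mul_eq_zero.mp h2).resolve_left hc
      linear_combination this
    subst hs
    have hq : q = 0 := by
      have h2 : q * c = 0 := by linear_combination e11
      exact (mul_eq_zero.mp h2).resolve_right hc
    subst hq
    exact sq_ne_neg_one p (by linear_combination -hdB)
  · have hs : s = -p := by
      have h2 : b * (s + p) = 0 := by linear_combination e12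
      have := (mul_eq_zero.mp h2).resolve_left hb
      linear_combination this
    subst hs
    have key : (p*b - q*(a-1))^2 = -b^2 := by
      linear_combination (-(q*b))*e11 - q^2*hdA - b^2*hdB
    have h5 : ((p*b - q*(a-1)) * b⁻¹)^2 = -1 := by
      rw [mul_pow, key]
      rw [show (-b^2) * (b⁻¹)^2 = -(b*b⁻¹)^2 by ring, mul_inv_cancel₀ hb]
      norm_num
    exact sq_ne_neg_one _ h5

lemma conj2 (a b c d p q r s : ZMod 7)
    (hdA : a*d - b*c = 1) (htr : a + d = 2)
    (hdB : p*s - q*r = 1)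
    (e11 : p*a + q*c = -(d*p - b*r))
    (e12 : p*b + q*d = -(d*q - b*s))
    (e21 : r*a + s*c = -(-(c*p) + a*r))
    (e22 : r*b + s*d = -(-(c*q) + a*s)) : False := by
  have hd : d = 2 - a := by linear_combination htr
  subst hd
  have hs : s = -p := by
    have h20 : (2 : ZMod 7) * (s + p) = 0 := by linear_combination e11 + e22
    rcases mul_eq_zero.mp h20 with h | h
    · exact absurd h (by decide)
    · linear_combination h
  subst hs
  have h4 : (4 : ZMod 7) = 0 := by
    linear_combination -q*e21 - r*e12 - 2*p*e11 - 4*hdB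
  exact absurd h4 (by decide)

abbrev SL7 := Matrix.SpecialLinearGroup (Fin 2) (ZMod 7)

lemma center_coe {z : SL7} (hz : z ∈ Subgroup.center SL7) :
    (z : Matrix (Fin 2) (Fin 2) (ZMod 7)) = 1 ∨ (z : Matrix (Fin 2) (Fin 2) (ZMod 7)) = -1 := by
  obtain ⟨r, hr, hrz⟩ := Matrix.SpecialLinearGroup.mem_center_iff.mp hz
  have h : r = 1 ∨ r = -1 := by
    have h2 : ∀ x : ZMod 7, x ^ Fintype.card (Fin 2) = 1 → x = 1 ∨ x = -1 := by decide
    exact h2 r hr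
  rcases h with h | h
  · left; rw [← hrz, h]; simp
  · right; rw [← hrz, h]; simp [← Matrix.diagonal_one, ← Matrix.diagonal_neg]

lemma sl_key (A B z : SL7) (hA : A ∉ Subgroup.center SL7)
    (h7 : A^7 ∈ Subgroup.center SL7) (hz : z ∈ Subgroup.center SL7)
    (hBA : B * A = A⁻¹ * z * B) : False := by
  have hdetA : (A : Matrix (Fin 2) (Fin 2) (ZMod 7)) 0 0 * (A : Matrix (Fin 2) (Fin 2) (ZMod 7)) 1 1
      - (A : Matrix (Fin 2) (Fin 2) (ZMod 7)) 0 1 * (A : Matrix (Fin 2) (Fin 2) (ZMod 7)) 1 0 = 1 := by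
    rw [← Matrix.det_fin_two]; exact A.2
  have hdetB : (B : Matrix (Fin 2) (Fin 2) (ZMod 7)) 0 0 * (B : Matrix (Fin 2) (Fin 2) (ZMod 7)) 1 1
      - (B : Matrix (Fin 2) (Fin 2) (ZMod 7)) 0 1 * (B : Matrix (Fin 2) (Fin 2) (ZMod 7)) 1 0 = 1 := by
    rw [← Matrix.det_fin_two]; exact B.2
  have h7m : (A : Matrix (Fin 2) (Fin 2) (ZMod 7))^7 = 1 ∨ (A : Matrix (Fin 2) (Fin 2) (ZMod 7))^7 = -1 := by
    rw [← Matrix.SpecialLinearGroup.coe_pow]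
    exact center_coe h7
  have htr : (A : Matrix (Fin 2) (Fin 2) (ZMod 7)) 0 0 + (A : Matrix (Fin 2) (Fin 2) (ZMod 7)) 1 1 = 2
      ∨ (A : Matrix (Fin 2) (Fin 2) (ZMod 7)) 0 0 + (A : Matrix (Fin 2) (Fin 2) (ZMod 7)) 1 1 = 5 := by
    apply traceLemmaM _ _ _ _ hdetA
    rw [← Matrix.eta_fin_two]
    exact h7m
  have hAne1 : (A : Matrix (Fin 2) (Fin 2) (ZMod 7)) ≠ 1 := by
    intro h
    exact hA (Matrix.SpecialLinearGroup.mem_center_iff.mpr ⟨1, by norm_num, by simp [h]⟩)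
  have hAne1' : (A : Matrix (Fin 2) (Fin 2) (ZMod 7)) ≠ -1 := by
    intro h
    exact hA (Matrix.SpecialLinearGroup.mem_center_iff.mpr ⟨-1, by norm_num, by simp [h, ← Matrix.diagonal_one, ← Matrix.diagonal_neg]⟩)
  have hm : (B : Matrix (Fin 2) (Fin 2) (ZMod 7)) * (A : Matrix (Fin 2) (Fin 2) (ZMod 7))
      = adjugate (A : Matrix (Fin 2) (Fin 2) (ZMod 7)) * (z : Matrix (Fin 2) (Fin 2) (ZMod 7))
        * (B : Matrix (Fin 2) (Fin 2) (ZMod 7)) := by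
    have := congrArg (fun X : SL7 => (X : Matrix (Fin 2) (Fin 2) (ZMod 7))) hBA
    simpa [Matrix.SpecialLinearGroup.coe_mul, Matrix.SpecialLinearGroup.coe_inv] using this
  set M : Matrix (Fin 2) (Fin 2) (ZMod 7) := (A : Matrix (Fin 2) (Fin 2) (ZMod 7))
  set N : Matrix (Fin 2) (Fin 2) (ZMod 7) := (B : Matrix (Fin 2) (Fin 2) (ZMod 7))
  rcases center_coe hz with hz1 | hz1 <;> rw [hz1] at hm
  · -- z = 1
    rw [mul_one] at hm
    have e00 := congrFun (congrFun hm 0) 0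
    have e01 := congrFun (congrFun hm 0) 1
    have e10 := congrFun (congrFun hm 1) 0
    have e11 := congrFun (congrFun hm 1) 1
    simp [Matrix.mul_apply, Fin.sum_univ_two, Matrix.adjugate_fin_two] at e00 e01 e10 e11
    rcases htr with htr | htr
    · refine conj1 (M 0 0) (M 0 1) (M 1 0) (M 1 1) (N 0 0) (N 0 1) (N 1 0) (N 1 1)
        hdetA htr ?_ hdetB (by linear_combination e00) (by linear_combination e01)
        (by linear_combination e10) (by linear_combination e11)
      rintro ⟨hb, hc⟩
      have hd : M 0 0 = 1 ∧ M 1 1 = 1 := by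
        have h2 : ∀ x y : ZMod 7, x*y - 0*0 = 1 → x + y = 2 → x = 1 ∧ y = 1 := by decide
        exact h2 _ _ (by linear_combination hdetA + M 1 0 * hb) htr
      apply hAne1
      ext i j
      fin_cases i <;> fin_cases j <;>
        simp [hb, hc, hd.1, hd.2, Matrix.one_apply]
    · refine conj1 (-(M 0 0)) (-(M 0 1)) (-(M 1 0)) (-(M 1 1)) (N 0 0) (N 0 1) (N 1 0) (N 1 1)
        (by linear_combination hdetA) (by linear_combination -htr - h70) ?_ hdetB
        (by linear_combination -e00) (by linear_combination -e01)
        (by linear_combination -e10) (by linear_combination -e11)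
      rintro ⟨hb, hc⟩
      rw [neg_eq_zero] at hb hc
      have hd : M 0 0 = -1 ∧ M 1 1 = -1 := by
        have h2 : ∀ x y : ZMod 7, x*y - 0*0 = 1 → x + y = 5 → x = -1 ∧ y = -1 := by decide
        exact h2 _ _ (by linear_combination hdetA + M 1 0 * hb) htr
      apply hAne1'
      ext i j
      fin_cases i <;> fin_cases j <;>
        simp [hb, hc, hd.1, hd.2, Matrix.one_apply]
  · -- z = -1
    rw [mul_neg_one] at hm
    have e00 := congrFun (congrFun hm 0) 0
    have e01 := congrFun (congrFun hm 0) 1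
    have e10 := congrFun (congrFun hm 1) 0
    have e11 := congrFun (congrFun hm 1) 1
    simp [Matrix.mul_apply, Fin.sum_univ_two, Matrix.adjugate_fin_two] at e00 e01 e10 e11
    rcases htr with htr | htr
    · exact conj2 (M 0 0) (M 0 1) (M 1 0) (M 1 1) (N 0 0) (N 0 1) (N 1 0) (N 1 1)
        hdetA htr hdetB (by linear_combination e00) (by linear_combination e01)
        (by linear_combination e10) (by linear_combination e11)
    · exact conj2 (-(M 0 0)) (-(M 0 1)) (-(M 1 0)) (-(M 1 1)) (N 0 0) (N 0 1) (N 1 0) (N 1 1)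
        (by linear_combination hdetA) (by linear_combination -htr - h70) hdetB
        (by linear_combination -e00) (by linear_combination -e01)
        (by linear_combination -e10) (by linear_combination -e11)

lemma psl_key (x y : PSL(2, ZMod 7)) (h7 : x^7 = 1) (h1 : x ≠ 1)
    (hcon : y * x * y⁻¹ = x⁻¹) : False := by
  obtain ⟨A, rfl⟩ := QuotientGroup.mk_surjective x
  obtain ⟨B, rfl⟩ := QuotientGroup.mk_surjective y
  have h7' : A^7 ∈ Subgroup.center SL7 := by
    rw [← QuotientGroup.eq_one_iff, QuotientGroup.mk_pow]
    exact h7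
  have hA : A ∉ Subgroup.center SL7 := by
    intro h
    exact h1 ((QuotientGroup.eq_one_iff A).mpr h)
  have hcon' : QuotientGroup.mk (B * A * B⁻¹) = (QuotientGroup.mk (A⁻¹) : PSL(2, ZMod 7)) := by
    rw [QuotientGroup.mk_mul, QuotientGroup.mk_mul, QuotientGroup.mk_inv, QuotientGroup.mk_inv]
    exact hcon
  have hw : (B * A * B⁻¹)⁻¹ * A⁻¹ ∈ Subgroup.center SL7 := QuotientGroup.eq.mp hcon'
  refine sl_key A B ((B * A * B⁻¹)⁻¹ * A⁻¹)⁻¹ hA h7' (Subgroup.inv_mem _ hw) ?_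
  group
end PSL27Aux

open PSL27Aux in
/-- PSL(2,7) has no subgroup isomorphic to the dihedral group of order 14. -/
theorem PSL27_no_dihedral_14 :
    ¬ ∃ K : Subgroup PSL(2, ZMod 7), Nonempty (↥K ≃* DihedralGroup 7) := by
  rintro ⟨K, ⟨e⟩⟩
  set u : K := e.symm (DihedralGroup.r 1) with hu
  set v : K := e.symm (DihedralGroup.sr 0) with hv
  have hu7 : u^7 = 1 := by
    rw [hu, ← _root_.map_pow, show (DihedralGroup.r (1 : ZMod 7))^7 = 1 from by decide, _root_.map_one]
  have hv2 : v * v = 1 := by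
    rw [hv, ← _root_.map_mul,
      show DihedralGroup.sr (0 : ZMod 7) * DihedralGroup.sr 0 = 1 from by decide, _root_.map_one]
  have hrel : v * u * v = u⁻¹ := by
    rw [hu, hv, ← _root_.map_mul, ← _root_.map_mul, ← _root_.map_inv,
      show DihedralGroup.sr (0 : ZMod 7) * DihedralGroup.r 1 * DihedralGroup.sr 0
        = (DihedralGroup.r 1)⁻¹ from by decide]
  have hu1 : u ≠ 1 := by
    intro h
    rw [hu] at h
    have h2 : DihedralGroup.r (1 : ZMod 7) = 1 := by
      apply e.symm.injective
      rw [h, _root_.map_one]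
    exact absurd h2 (by decide)
  have hvinv : v⁻¹ = v := inv_eq_of_mul_eq_one_right hv2
  have hconK : v * u * v⁻¹ = u⁻¹ := by rw [hvinv, hrel]
  have hx7 : (u : PSL(2, ZMod 7))^7 = 1 := by exact_mod_cast congrArg (↑·) hu7
  have hx1 : (u : PSL(2, ZMod 7)) ≠ 1 := by
    intro h
    exact hu1 (by exact_mod_cast h)
  exact psl_key (u : PSL(2, ZMod 7)) (v : PSL(2, ZMod 7)) hx7 hx1
    (by exact_mod_cast congrArg (↑·) hconK)
end

section
/- There exists a surjective homomorphism from the triangle group (2,3,7) onto PSL(2,7). -/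
open MatrixGroups

open Matrix Matrix.SpecialLinearGroup

/-- The triangle group ⟨x,y,z | x^p = y^q = z^r = xyz = 1⟩. -/
def TriangleGroup (p q r : ℕ) : Type :=
  PresentedGroup ({FreeGroup.of 0 ^ p, FreeGroup.of 1 ^ q, FreeGroup.of 2 ^ r,
    FreeGroup.of 0 * FreeGroup.of 1 * FreeGroup.of 2} : Set (FreeGroup (Fin 3)))

instance (p q r : ℕ) : Group (TriangleGroup p q r) := by
  unfold TriangleGroup; infer_instance


abbrev K := ZMod 7
instance : Fact (Nat.Prime 7) := ⟨by norm_num⟩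

noncomputable section
namespace Tri

def U (t : K) : SL(2, K) := ⟨!![1, t; 0, 1], by simp [Matrix.det_fin_two_of]⟩
def L (t : K) : SL(2, K) := ⟨!![1, 0; t, 1], by simp [Matrix.det_fin_two_of]⟩
def S : SL(2, K) := ⟨!![0, -1; 1, 0], by decide⟩

lemma U_mul (a b : K) : U a * U b = U (a + b) := by
  apply Subtype.ext
  rw [Matrix.SpecialLinearGroup.coe_mul]
  simp [U, Matrix.mul_fin_two]
  ring

lemma U_zero : U 0 = 1 := by apply Subtype.ext; simp [U]; decide

lemma U_pow (n : ℕ) : U 1 ^ n = U n := by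
  induction n with
  | zero => simp [U_zero]
  | succ n ih => rw [pow_succ, ih, U_mul]; push_cast; ring_nf

lemma L_eq (t : K) : L t = S ^ 3 * U (-t) * S := by
  apply Subtype.ext
  show _ = (((S^3 : SL(2, K)) : Matrix (Fin 2) (Fin 2) K) * ((U (-t) : SL(2, K)) : Matrix (Fin 2) (Fin 2) K)) * ((S : SL(2, K)) : Matrix (Fin 2) (Fin 2) K)
  rw [Matrix.SpecialLinearGroup.coe_pow]
  simp [U, L, S, pow_succ, Matrix.mul_fin_two]

lemma U_mem (t : K) : U t ∈ Subgroup.closure {S, U 1} := by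
  have h : U 1 ∈ Subgroup.closure {S, U 1} :=
    Subgroup.subset_closure (by simp)
  have := pow_mem h t.val
  rwa [U_pow, ZMod.natCast_val, ZMod.cast_id] at this

lemma S_mem : S ∈ Subgroup.closure {S, U 1} := Subgroup.subset_closure (by simp)

lemma L_mem (t : K) : L t ∈ Subgroup.closure {S, U 1} := by
  rw [L_eq]
  exact mul_mem (mul_mem (pow_mem S_mem 3) (U_mem _)) S_mem

lemma key (a b c d : K) (hc : c ≠ 0) (hdet : a * d - b * c = 1) :
    (!![1, (a-1)/c; 0, 1] * !![1, 0; c, 1]) * !![1, (d-1)/c; 0, 1] = !![a, b; c, d] := by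
  simp only [Matrix.mul_fin_two]
  ext i j
  fin_cases i <;> fin_cases j <;>
    simp only [Matrix.cons_val', Matrix.cons_val_zero, Matrix.cons_val_one, Matrix.head_cons,
      Matrix.empty_val', Matrix.cons_val_fin_one, Matrix.head_fin_const, Fin.isValue, Fin.zero_eta, Fin.mk_one, Matrix.of_apply] <;>
    field_simp
  · ring
  · linear_combination hdet
  · ring
  · ring

lemma mem_aux (g : SL(2, K)) (hc : (g : Matrix (Fin 2) (Fin 2) K) 1 0 ≠ 0) :
    g ∈ Subgroup.closure {S, U 1} := by
  set a := (g : Matrix (Fin 2) (Fin 2) K) 0 0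
  set b := (g : Matrix (Fin 2) (Fin 2) K) 0 1
  set c := (g : Matrix (Fin 2) (Fin 2) K) 1 0
  set d := (g : Matrix (Fin 2) (Fin 2) K) 1 1
  have hdet : a * d - b * c = 1 := by
    have := g.2
    rwa [Matrix.det_fin_two] at this
  have hg : g = U ((a-1)/c) * L c * U ((d-1)/c) := by
    apply Subtype.ext
    show (g : Matrix (Fin 2) (Fin 2) K) = (((U ((a-1)/c) : SL(2, K)) : Matrix (Fin 2) (Fin 2) K) * ((L c : SL(2, K)) : Matrix (Fin 2) (Fin 2) K)) * ((U ((d-1)/c) : SL(2, K)) : Matrix (Fin 2) (Fin 2) K)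
    rw [Matrix.eta_fin_two (g : Matrix (Fin 2) (Fin 2) K)]
    exact (key a b c d hc hdet).symm
  rw [hg]
  exact mul_mem (mul_mem (U_mem _) (L_mem _)) (U_mem _)

lemma closure_eq_top : Subgroup.closure {S, U 1} = ⊤ := by
  rw [eq_top_iff]
  intro g _
  by_cases hc : (g : Matrix (Fin 2) (Fin 2) K) 1 0 ≠ 0
  · exact mem_aux g hc
  · push_neg at hc
    have ha : (↑(S * g) : Matrix (Fin 2) (Fin 2) K) 1 0 ≠ 0 := by
      have hdet : (g : Matrix (Fin 2) (Fin 2) K) 0 0 * (g : Matrix (Fin 2) (Fin 2) K) 1 1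
          - (g : Matrix (Fin 2) (Fin 2) K) 0 1 * (g : Matrix (Fin 2) (Fin 2) K) 1 0 = 1 := by
        have := g.2; rwa [Matrix.det_fin_two] at this
      rw [Matrix.SpecialLinearGroup.coe_mul]
      simp [S, Matrix.mul_apply, Fin.sum_univ_two]
      intro h
      rw [h, hc] at hdet
      simp at hdet
    have := mem_aux (S * g) ha
    have hg : g = S⁻¹ * (S * g) := by group
    rw [hg]
    exact mul_mem (inv_mem S_mem) this

def Y : SL(2, K) := ⟨!![0, 1; -1, 1], by decide⟩

lemma neg_one_mem_center : (-1 : SL(2, K)) ∈ Subgroup.center (SL(2, K)) := by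
  rw [Subgroup.mem_center_iff]
  intro g
  apply Subtype.ext
  rw [Matrix.SpecialLinearGroup.coe_mul, Matrix.SpecialLinearGroup.coe_mul,
    Matrix.SpecialLinearGroup.coe_neg, Matrix.SpecialLinearGroup.coe_one]
  simp

abbrev π : SL(2, K) →* PSL(2, K) := QuotientGroup.mk' (Subgroup.center (SL(2, K)))

lemma pi_neg_one : π (-1) = 1 := (QuotientGroup.eq_one_iff _).mpr neg_one_mem_center

lemma S_sq : S ^ 2 = -1 := by
  rw [pow_two]
  apply Subtype.ext
  rw [Matrix.SpecialLinearGroup.coe_mul, Matrix.SpecialLinearGroup.coe_neg, Matrix.SpecialLinearGroup.coe_one]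
  decide

lemma Y_cube : Y ^ 3 = -1 := by
  rw [pow_succ, pow_two]
  apply Subtype.ext
  rw [Matrix.SpecialLinearGroup.coe_mul, Matrix.SpecialLinearGroup.coe_mul,
    Matrix.SpecialLinearGroup.coe_neg, Matrix.SpecialLinearGroup.coe_one]
  decide

lemma SYU : S * Y * U 1 = 1 := by
  apply Subtype.ext
  rw [Matrix.SpecialLinearGroup.coe_mul, Matrix.SpecialLinearGroup.coe_mul, Matrix.SpecialLinearGroup.coe_one]
  decide

lemma U_seven : (U 1) ^ 7 = 1 := by
  rw [U_pow]
  apply Subtype.ext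
  rw [Matrix.SpecialLinearGroup.coe_one]
  show !![1, ((7:ℕ):K); 0, 1] = 1
  decide

end Tri

open Tri in
/-- There is a surjective homomorphism from the triangle group (2,3,7) onto PSL(2,7). -/
theorem triangle_2_3_7_surjects_onto_PSL27 :
    ∃ f : TriangleGroup 2 3 7 →* PSL(2, ZMod 7), Function.Surjective f := by
  classical
  set rels : Set (FreeGroup (Fin 3)) :=
    {FreeGroup.of 0 ^ 2, FreeGroup.of 1 ^ 3, FreeGroup.of 2 ^ 7,
      FreeGroup.of 0 * FreeGroup.of 1 * FreeGroup.of 2} with hrels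
  set φ : Fin 3 → PSL(2, K) := ![π S, π Y, π (U 1)] with hφ
  have h0 : φ 0 = π S := rfl
  have h1 : φ 1 = π Y := rfl
  have h2 : φ 2 = π (U 1) := rfl
  have hrel : ∀ r ∈ rels, FreeGroup.lift φ r = 1 := by
    intro r hr
    rcases hr with h | h | h | h <;> subst h
    · rw [map_pow, FreeGroup.lift_apply_of, h0, ← map_pow, S_sq, pi_neg_one]
    · rw [map_pow, FreeGroup.lift_apply_of, h1, ← map_pow, Y_cube, pi_neg_one]
    · rw [map_pow, FreeGroup.lift_apply_of, h2, ← map_pow, U_seven, _root_.map_one]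
    · rw [_root_.map_mul, _root_.map_mul, FreeGroup.lift_apply_of, FreeGroup.lift_apply_of,
        FreeGroup.lift_apply_of, h0, h1, h2, ← _root_.map_mul, ← _root_.map_mul, SYU, _root_.map_one]
  refine ⟨PresentedGroup.toGroup hrel, ?_⟩
  show Function.Surjective (PresentedGroup.toGroup hrel)
  rw [← MonoidHom.range_eq_top, eq_top_iff]
  have hπ : Function.Surjective π := QuotientGroup.mk'_surjective _
  calc (⊤ : Subgroup (PSL(2, K))) = Subgroup.map π ⊤ := (Subgroup.map_top_of_surjective π hπ).symm
    _ = Subgroup.map π (Subgroup.closure {S, U 1}) := by rw [closure_eq_top]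
    _ = Subgroup.closure (↑π '' {S, U 1}) := MonoidHom.map_closure π _
    _ ≤ (PresentedGroup.toGroup hrel).range := by
        rw [Subgroup.closure_le]
        rintro x ⟨y, hy | hy, rfl⟩ <;> subst hy
        · exact ⟨PresentedGroup.of 0, PresentedGroup.toGroup.of hrel⟩
        · exact ⟨PresentedGroup.of 2, PresentedGroup.toGroup.of hrel⟩

end
end
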